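/- Let Ω₀ and B₀ be bounded self-adjoint operators on a Hilbert space h with B₀ Hilbert–Schmidt, satisfying Ω₀ + 2B₀ ≥ μ₋·1 and Ω₀ − 2B₀ + P ≥ μ₊·1, where μ₋, μ₊ > 0 and P is the orthogonal projection onto the (finite-dimensional) subspace where Ω₀ = 2B₀ (i.e., P projects onto ker(Ω₀ − 2B₀)). Then Ω₀ ≥ (μ₋/2)·1; in particular Ω₀ is boundedly invertible. -/

import Mathlib

open scoped InnerProductSpace

/-- Kato–Mugibayashi assumption: if `Ω + 2B ≥ μ₋·1` and `Ω − 2B + P ≥ μ₊·1` with `P` the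
orthogonal projection onto the finite-dimensional kernel of `Ω − 2B`, then
`Ω ≥ (μ₋/2)·1`; in particular `Ω` is boundedly invertible. -/
theorem stmt_1 {H ι : Type*} [NormedAddCommGroup H] [InnerProductSpace ℂ H] [CompleteSpace H]
    (e : HilbertBasis ι ℂ H)
    (Ω B P : H →L[ℂ] H) (μm μp : ℝ) (hμm : 0 < μm) (hμp : 0 < μp)
    (hΩsa : IsSelfAdjoint Ω) (hBsa : IsSelfAdjoint B)
    (hHS : Summable fun k => ‖B (e k)‖ ^ 2)
    (hPsa : IsSelfAdjoint P) (hPidem : P * P = P)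
    (hPrange : LinearMap.range (P : H →ₗ[ℂ] H) = LinearMap.ker ((Ω - (2 : ℂ) • B : H →L[ℂ] H) : H →ₗ[ℂ] H))
    (hfd : FiniteDimensional ℂ (LinearMap.ker ((Ω - (2 : ℂ) • B : H →L[ℂ] H) : H →ₗ[ℂ] H)))
    (h1 : ∀ ψ : H, μm * ‖ψ‖ ^ 2 ≤ (⟪ψ, Ω ψ⟫_ℂ + 2 * ⟪ψ, B ψ⟫_ℂ).re)
    (h2 : ∀ ψ : H, μp * ‖ψ‖ ^ 2 ≤ (⟪ψ, Ω ψ⟫_ℂ - 2 * ⟪ψ, B ψ⟫_ℂ + ⟪ψ, P ψ⟫_ℂ).re) :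
    (∀ ψ : H, μm / 2 * ‖ψ‖ ^ 2 ≤ (⟪ψ, Ω ψ⟫_ℂ).re) ∧
      ∃ Ωinv : H →L[ℂ] H, Ω * Ωinv = 1 ∧ Ωinv * Ω = 1 := by
  set A : H →L[ℂ] H := Ω - (2 : ℂ) • B with hA
  have hAsa : IsSelfAdjoint A := by
    refine hΩsa.sub ?_
    exact (IsSelfAdjoint.smul (by norm_num) hBsa)
  -- A = Ω - 2B is positive
  have hApos : ∀ ψ : H, 0 ≤ (⟪ψ, Ω ψ⟫_ℂ - 2 * ⟪ψ, B ψ⟫_ℂ).re := by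
    intro ψ
    set ψ₀ := P ψ with hψ₀
    set ψ₁ := ψ - P ψ with hψ₁
    have hP1 : P ψ₁ = 0 := by
      have := congrArg (fun T : H →L[ℂ] H => T ψ) hPidem
      simp only [ContinuousLinearMap.mul_apply] at this
      simp [hψ₁, map_sub, this]
    have hA0 : A ψ₀ = 0 := by
      have : ψ₀ ∈ LinearMap.range (P : H →ₗ[ℂ] H) := ⟨ψ, rfl⟩
      rw [hPrange] at this
      exact this
    have hsplit : ψ = ψ₀ + ψ₁ := by simp [hψ₀, hψ₁]
    have hAψ : A ψ = A ψ₁ := by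
      rw [hsplit, map_add, hA0, zero_add]
    have hinnerA : ∀ φ : H, ⟪φ, A φ⟫_ℂ = ⟪φ, Ω φ⟫_ℂ - 2 * ⟪φ, B φ⟫_ℂ := by
      intro φ
      simp only [hA, ContinuousLinearMap.sub_apply, ContinuousLinearMap.smul_apply,
        inner_sub_right, inner_smul_right]
    have key : ⟪ψ, A ψ⟫_ℂ = ⟪ψ₁, A ψ₁⟫_ℂ := by
      rw [hAψ]
      nth_rewrite 1 [hsplit]
      rw [inner_add_left]
      have : ⟪ψ₀, A ψ₁⟫_ℂ = 0 := by
        rw [← ContinuousLinearMap.adjoint_inner_left A ψ₁ ψ₀, hAsa.adjoint_eq,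
          hA0, inner_zero_left]
      rw [this, zero_add]
    have h2' := h2 ψ₁
    have hP1' : ⟪ψ₁, P ψ₁⟫_ℂ = 0 := by rw [hP1, inner_zero_right]
    rw [hP1', add_zero] at h2'
    have : 0 ≤ (⟪ψ₁, Ω ψ₁⟫_ℂ - 2 * ⟪ψ₁, B ψ₁⟫_ℂ).re := by
      refine le_trans ?_ h2'
      positivity
    calc (0:ℝ) ≤ (⟪ψ₁, A ψ₁⟫_ℂ).re := by rwa [hinnerA]
    _ = (⟪ψ, A ψ⟫_ℂ).re := by rw [key]
    _ = (⟪ψ, Ω ψ⟫_ℂ - 2 * ⟪ψ, B ψ⟫_ℂ).re := by rw [hinnerA]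
  have hcoerc : ∀ ψ : H, μm / 2 * ‖ψ‖ ^ 2 ≤ (⟪ψ, Ω ψ⟫_ℂ).re := by
    intro ψ
    have h1' := h1 ψ
    have h2' := hApos ψ
    have e1 : (⟪ψ, Ω ψ⟫_ℂ + 2 * ⟪ψ, B ψ⟫_ℂ).re
        = (⟪ψ, Ω ψ⟫_ℂ).re + (2 * ⟪ψ, B ψ⟫_ℂ).re := by simp
    have e2 : (⟪ψ, Ω ψ⟫_ℂ - 2 * ⟪ψ, B ψ⟫_ℂ).re
        = (⟪ψ, Ω ψ⟫_ℂ).re - (2 * ⟪ψ, B ψ⟫_ℂ).re := by simp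
    rw [e1] at h1'
    rw [e2] at h2'
    linarith
  refine ⟨hcoerc, ?_⟩
  -- lower bound ‖Ω ψ‖ ≥ (μm/2) ‖ψ‖
  have hbound : ∀ ψ : H, μm / 2 * ‖ψ‖ ≤ ‖Ω ψ‖ := by
    intro ψ
    rcases eq_or_ne ψ 0 with rfl | hψ
    · simp
    · have h0 : 0 < ‖ψ‖ := norm_pos_iff.mpr hψ
      have h3 : μm / 2 * ‖ψ‖ ^ 2 ≤ ‖ψ‖ * ‖Ω ψ‖ := by
        calc μm / 2 * ‖ψ‖ ^ 2 ≤ (⟪ψ, Ω ψ⟫_ℂ).re := hcoerc ψ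
        _ ≤ ‖⟪ψ, Ω ψ⟫_ℂ‖ := Complex.re_le_norm _
        _ ≤ ‖ψ‖ * ‖Ω ψ‖ := norm_inner_le_norm _ _
      nlinarith
  have hker : LinearMap.ker (Ω : H →ₗ[ℂ] H) = ⊥ := by
    rw [LinearMap.ker_eq_bot']
    intro ψ hψ
    change Ω ψ = 0 at hψ
    have := hbound ψ
    rw [hψ, norm_zero] at this
    have : ‖ψ‖ ≤ 0 := by nlinarith
    simpa using le_antisymm this (norm_nonneg ψ)
  have hanti : AntilipschitzWith ⟨(μm / 2)⁻¹, by positivity⟩ Ω := by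
    apply Ω.antilipschitz_of_bound
    intro x
    have hc : (0:ℝ) < μm / 2 := by positivity
    change ‖x‖ ≤ (μm / 2)⁻¹ * ‖Ω x‖
    rw [inv_mul_eq_div, le_div_iff₀ hc, mul_comm]
    exact hbound x
  have hclosed : IsClosed (LinearMap.range (Ω : H →ₗ[ℂ] H) : Set H) :=
    hanti.isClosed_range Ω.uniformContinuous
  have hrange : LinearMap.range (Ω : H →ₗ[ℂ] H) = ⊤ := by
    haveI : CompleteSpace (LinearMap.range (Ω : H →ₗ[ℂ] H)) := hclosed.completeSpace_coe
    haveI : Submodule.HasOrthogonalProjection (LinearMap.range (Ω : H →ₗ[ℂ] H)) :=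
      Submodule.HasOrthogonalProjection.ofCompleteSpace _
    rw [← Submodule.orthogonal_eq_bot_iff]
    rw [Submodule.eq_bot_iff]
    intro φ hφ
    have h0 : ⟪Ω φ, φ⟫_ℂ = 0 := hφ (Ω φ) ⟨φ, rfl⟩
    have h0' : ⟪φ, Ω φ⟫_ℂ = 0 := by
      rw [← inner_conj_symm, h0, map_zero]
    have := hcoerc φ
    rw [h0'] at this
    have : ‖φ‖ ^ 2 ≤ 0 := by
      simp only [Complex.zero_re] at this
      nlinarith
    have : ‖φ‖ = 0 := by nlinarith [norm_nonneg φ, sq_nonneg ‖φ‖]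
    simpa using this
  let eqv : H ≃L[ℂ] H := ContinuousLinearEquiv.ofBijective Ω hker hrange
  refine ⟨(eqv.symm : H →L[ℂ] H), ?_, ?_⟩
  · ext x
    have : Ω (eqv.symm x) = eqv (eqv.symm x) := rfl
    simp [ContinuousLinearMap.mul_apply, this]
  · ext x
    have : Ω x = eqv x := rfl
    simp [ContinuousLinearMap.mul_apply, this]
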